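/- For any constants $p,q,r>0$, the function $f(x,y,z_1,z_2) = e^{qy}/(x^p z_1^r z_2^r)$ is strictly convex on $(0,\infty)\times\mathbb{R}\times(0,\infty)\times(0,\infty)$. -/
import Mathlib


open Set Real

/-- For constants `p, q, r > 0`, the function
`f(x,y,z₁,z₂) = e^{qy} / (x^p z₁^r z₂^r)` is strictly convex on
`(0,∞) × ℝ × (0,∞) × (0,∞)`. -/
theorem stmt3 (p q r : ℝ) (hp : 0 < p) (hq : 0 < q) (hr : 0 < r) :
    StrictConvexOn ℝ
      ((Ioi (0:ℝ)) ×ˢ ((univ : Set ℝ) ×ˢ ((Ioi (0:ℝ)) ×ˢ Ioi (0:ℝ))))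
      (fun w : ℝ × ℝ × ℝ × ℝ =>
        Real.exp (q * w.2.1) / (w.1 ^ p * w.2.2.1 ^ r * w.2.2.2 ^ r)) := by
  set G : ℝ × ℝ × ℝ × ℝ → ℝ := fun w =>
    q * w.2.1 - p * Real.log w.1 - r * Real.log w.2.2.1 - r * Real.log w.2.2.2 with hG
  have hfG : ∀ w : ℝ × ℝ × ℝ × ℝ, 0 < w.1 → 0 < w.2.2.1 → 0 < w.2.2.2 →
      Real.exp (q * w.2.1) / (w.1 ^ p * w.2.2.1 ^ r * w.2.2.2 ^ r) = Real.exp (G w) := by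
    intro w h1 h2 h3
    rw [Real.rpow_def_of_pos h1, Real.rpow_def_of_pos h2, Real.rpow_def_of_pos h3,
      ← Real.exp_add, ← Real.exp_add, ← Real.exp_sub]
    simp [hG, mul_comm]
    ring_nf
  constructor
  · exact (convex_Ioi 0).prod (convex_univ.prod ((convex_Ioi 0).prod (convex_Ioi 0)))
  intro u hu v hv huv a b ha hb hab
  simp only [mem_prod, mem_Ioi, mem_univ, true_and] at hu hv
  obtain ⟨hux, hus, hut⟩ := hu
  obtain ⟨hvx, hvs, hvt⟩ := hv
  have hwx : 0 < (a • u + b • v).1 := by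
    simp only [Prod.fst_add, Prod.smul_fst, smul_eq_mul]
    positivity
  have hws : 0 < (a • u + b • v).2.2.1 := by
    simp only [Prod.snd_add, Prod.smul_snd, Prod.fst_add, Prod.smul_fst, smul_eq_mul]
    positivity
  have hwt : 0 < (a • u + b • v).2.2.2 := by
    simp only [Prod.snd_add, Prod.smul_snd, smul_eq_mul]
    positivity
  simp only []
  rw [hfG _ hwx hws hwt, hfG _ hux hus hut, hfG _ hvx hvs hvt]
  -- log inequalities
  have hlogx : a * Real.log u.1 + b * Real.log v.1 ≤ Real.log (a * u.1 + b * v.1) :=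
    strictConcaveOn_log_Ioi.concaveOn.2 hux hvx ha.le hb.le hab
  have hlogs : a * Real.log u.2.2.1 + b * Real.log v.2.2.1 ≤
      Real.log (a * u.2.2.1 + b * v.2.2.1) :=
    strictConcaveOn_log_Ioi.concaveOn.2 hus hvs ha.le hb.le hab
  have hlogt : a * Real.log u.2.2.2 + b * Real.log v.2.2.2 ≤
      Real.log (a * u.2.2.2 + b * v.2.2.2) :=
    strictConcaveOn_log_Ioi.concaveOn.2 hut hvt ha.le hb.le hab
  have hGw : G (a • u + b • v) = q * (a * u.2.1 + b * v.2.1)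
      - p * Real.log (a * u.1 + b * v.1)
      - r * Real.log (a * u.2.2.1 + b * v.2.2.1)
      - r * Real.log (a * u.2.2.2 + b * v.2.2.2) := by
    simp [hG, Prod.fst_add, Prod.snd_add, Prod.smul_fst, Prod.smul_snd, smul_eq_mul]
  have hGle : G (a • u + b • v) ≤ a * G u + b * G v := by
    rw [hGw]; simp only [hG]
    have h1 := mul_le_mul_of_nonneg_left hlogx hp.le
    have h2 := mul_le_mul_of_nonneg_left hlogs hr.le
    have h3 := mul_le_mul_of_nonneg_left hlogt hr.le
    linarith
  by_cases hGuv : G u = G v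
  · -- then some log-coordinate must differ strictly
    have hne : u.1 ≠ v.1 ∨ u.2.2.1 ≠ v.2.2.1 ∨ u.2.2.2 ≠ v.2.2.2 := by
      by_contra hc
      push_neg at hc
      obtain ⟨h1, h2, h3⟩ := hc
      have hy : u.2.1 = v.2.1 := by
        simp only [hG, h1, h2, h3] at hGuv
        have : q * u.2.1 = q * v.2.1 := by linarith
        exact mul_left_cancel₀ hq.ne' this
      exact huv (Prod.ext h1 (Prod.ext hy (Prod.ext h2 h3)))
    have hGlt : G (a • u + b • v) < a * G u + b * G v := by
      rw [hGw]; simp only [hG]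
      rcases hne with h | h | h
      · have := strictConcaveOn_log_Ioi.2 hux hvx h ha hb hab
        simp only [smul_eq_mul] at this
        have h1 := mul_lt_mul_of_pos_left this hp
        have h2 := mul_le_mul_of_nonneg_left hlogs hr.le
        have h3 := mul_le_mul_of_nonneg_left hlogt hr.le
        linarith
      · have := strictConcaveOn_log_Ioi.2 hus hvs h ha hb hab
        simp only [smul_eq_mul] at this
        have h1 := mul_le_mul_of_nonneg_left hlogx hp.le
        have h2 := mul_lt_mul_of_pos_left this hr
        have h3 := mul_le_mul_of_nonneg_left hlogt hr.le
        linarith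
      · have := strictConcaveOn_log_Ioi.2 hut hvt h ha hb hab
        simp only [smul_eq_mul] at this
        have h1 := mul_le_mul_of_nonneg_left hlogx hp.le
        have h2 := mul_le_mul_of_nonneg_left hlogs hr.le
        have h3 := mul_lt_mul_of_pos_left this hr
        linarith
    calc Real.exp (G (a • u + b • v)) < Real.exp (a * G u + b * G v) :=
          Real.exp_lt_exp.2 hGlt
      _ ≤ a * Real.exp (G u) + b * Real.exp (G v) := by
          have := convexOn_exp.2 (mem_univ (G u)) (mem_univ (G v)) ha.le hb.le hab
          simpa using this
  · calc Real.exp (G (a • u + b • v)) ≤ Real.exp (a * G u + b * G v) :=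
          Real.exp_le_exp.2 hGle
      _ < a * Real.exp (G u) + b * Real.exp (G v) := by
          have := strictConvexOn_exp.2 (mem_univ (G u)) (mem_univ (G v)) hGuv ha hb hab
          simpa using this
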